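/- Fix n ∈ ℕ and β ∈ (1/2, 1), and let Γ be a random vector in {0,1}^n whose coordinates are independent, each equal to 0 with probability β and to 1 with probability 1−β. Let h : {0,1}^n → {0,1}, let a ∈ {0,1}^n, and define the smoothed classifier g̃(b) = 1 if P(h(b ⊕ Γ) = 1) > 1/2 and g̃(b) = 0 otherwise. For i ∈ ℤ and Δ ∈ {0,1}^n, write H_i(Δ) = {z ∈ {0,1}^n : ‖z ⊕ a ⊕ Δ‖₀ − ‖z ⊕ a‖₀ = i}. Suppose P(h(a ⊕ Γ) = 1) > 1/2, and suppose ε ∈ ℕ is such that for every Δ ∈ {0,1}^n with ‖Δ‖₀ ≤ ε there exist μ_Δ ∈ ℤ and H'_Δ ⊆ H_{μ_Δ}(Δ) such that, setting H_Δ = (⋃_{i > μ_Δ} H_i(Δ)) ∪ H'_Δ, one has P(a ⊕ Γ ∈ H_Δ) ≤ P(h(a ⊕ Γ) = 1) and P(a ⊕ Δ ⊕ Γ ∈ H_Δ) > 1/2. Then for every Δ ∈ {0,1}^n with ‖Δ‖₀ ≤ ε, P(h(a ⊕ Δ ⊕ Γ) = 1) > 1/2 and hence g̃(a ⊕ Δ)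 = g̃(a) = 1. -/

import Mathlib

open MeasureTheory ProbabilityTheory
open scoped ENNReal

/-- The Bernoulli flip-noise distribution on `{0,1} = ZMod 2`: it takes the value `0` with
probability `β` and the value `1` with probability `1 − β`. -/
noncomputable def flipNoise (β : ℝ) : Measure (ZMod 2) :=
  ENNReal.ofReal β • Measure.dirac 0 + ENNReal.ofReal (1 - β) • Measure.dirac 1

namespace Stmt15Aux

open scoped NNReal Classical

instance (β : ℝ) : IsFiniteMeasure (flipNoise β) := by
  constructor
  rw [flipNoise]
  simp only [Measure.coe_add, Measure.coe_smul, Pi.add_apply, Pi.smul_apply, smul_eq_mul,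
    measure_univ, mul_one]
  exact ENNReal.add_lt_top.2 ⟨ENNReal.ofReal_lt_top, ENNReal.ofReal_lt_top⟩

lemma zmod2_em (c : ZMod 2) : c = 0 ∨ c = 1 := by revert c; decide

lemma flipNoise_singleton (β : ℝ) (c : ZMod 2) :
    flipNoise β {c} = ((if c = 0 then β.toNNReal else (1 - β).toNNReal : ℝ≥0) : ℝ≥0∞) := by
  rcases zmod2_em c with rfl | rfl <;>
    simp [flipNoise, Measure.dirac_apply, ENNReal.ofReal, Set.indicator_apply]

variable {n : ℕ}

/-- the weight of a point. -/
noncomputable def W (β : ℝ) (x : Fin n → ZMod 2) : ℝ≥0 :=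
  ∏ i, if x i = 0 then β.toNNReal else (1 - β).toNNReal

lemma pi_singleton (β : ℝ) (x : Fin n → ZMod 2) :
    Measure.pi (fun _ : Fin n => flipNoise β) {x} = (W β x : ℝ≥0∞) := by
  rw [← Set.univ_pi_singleton x, Measure.pi_pi]
  simp only [flipNoise_singleton, W, ENNReal.coe_finset_prod]

lemma meas_set (β : ℝ) (S : Set (Fin n → ZMod 2)) :
    Measure.pi (fun _ : Fin n => flipNoise β) S
      = ((∑ x ∈ Finset.univ.filter (· ∈ S), W β x : ℝ≥0) : ℝ≥0∞) := by
  have hS : S = ⋃ x ∈ Finset.univ.filter (· ∈ S), ({x} : Set (Fin n → ZMod 2)) := by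
    ext y; simp
  conv_lhs => rw [hS]
  rw [measure_biUnion_finset ?_ (fun x _ => measurableSet_singleton x)]
  · rw [ENNReal.coe_finset_sum]
    exact Finset.sum_congr rfl fun x _ => pi_singleton β x
  · intro x _ y _ hxy
    simp [Set.disjoint_singleton, hxy]

lemma add_self (x : Fin n → ZMod 2) : x + x = 0 :=
  funext fun i => CharTwo.add_self_eq_zero (x i)

lemma cancel_left (c z : Fin n → ZMod 2) : c + (z + c) = z := by
  rw [add_comm z c, ← add_assoc, add_self, zero_add]

lemma cancel_right (c a : Fin n → ZMod 2) : (c + a) + c = a := by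
  rw [add_comm c a, add_assoc, add_self, add_zero]

lemma meas_shift (β : ℝ) (c : Fin n → ZMod 2) (S : Set (Fin n → ZMod 2)) :
    Measure.pi (fun _ : Fin n => flipNoise β) {γ | c + γ ∈ S}
      = ((∑ z ∈ Finset.univ.filter (· ∈ S), W β (z + c) : ℝ≥0) : ℝ≥0∞) := by
  rw [meas_set]
  congr 1
  refine Finset.sum_bij' (fun γ _ => c + γ) (fun z _ => z + c) ?_ ?_ ?_ ?_ ?_
  · intro a ha; simp only [Finset.mem_filter, Finset.mem_univ, true_and,
      Set.mem_setOf_eq] at ha ⊢; exact ha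
  · intro z hz; simp only [Finset.mem_filter, Finset.mem_univ, true_and,
      Set.mem_setOf_eq] at hz ⊢
    rwa [cancel_left]
  · intro a _; simp [cancel_right]
  · intro z _; simp [cancel_left]
  · intro a _; rw [cancel_right]

lemma W_eq (β : ℝ) (hβ : β ∈ Set.Ioo (1 / 2 : ℝ) 1) (x : Fin n → ZMod 2) :
    W β x = β.toNNReal ^ n * ((1 - β).toNNReal / β.toNNReal) ^ ((hammingNorm x : ℤ)) := by
  obtain ⟨hβ0, hβ1⟩ := hβ
  have hB : (0 : ℝ≥0) < β.toNNReal := by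
    rw [Real.toNNReal_pos]; linarith
  set B := β.toNNReal
  set C := (1 - β).toNNReal
  have hk : hammingNorm x ≤ n := by
    simpa using (hammingNorm_le_card_fintype (x := x))
  have hc2 : (Finset.univ.filter fun i => ¬ x i = 0).card = hammingNorm x := by
    simp [hammingNorm, ne_eq]
  have hcards := Finset.card_filter_add_card_filter_not
    (s := (Finset.univ : Finset (Fin n))) (p := fun i => x i = 0)
  simp only [Finset.card_univ, Fintype.card_fin] at hcards
  have hc1 : (Finset.univ.filter fun i => x i = 0).card = n - hammingNorm x := by omega
  have h1 : W β x = B ^ (n - hammingNorm x) * C ^ hammingNorm x := by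
    rw [W, Finset.prod_ite, Finset.prod_const, Finset.prod_const, hc1, hc2]
  rw [h1, zpow_natCast, div_pow, pow_sub₀ B hB.ne' hk]
  field_simp

lemma key_ratio (β : ℝ) (hβ : β ∈ Set.Ioo (1 / 2 : ℝ) 1) (m : ℤ)
    (x x' : Fin n → ZMod 2) :
    (m ≤ (hammingNorm x' : ℤ) - hammingNorm x →
      W β x' ≤ ((1 - β).toNNReal / β.toNNReal) ^ m * W β x) ∧
    ((hammingNorm x' : ℤ) - hammingNorm x ≤ m →
      ((1 - β).toNNReal / β.toNNReal) ^ m * W β x ≤ W β x') := by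
  obtain ⟨hβ0, hβ1⟩ := hβ
  have hB : (0 : ℝ≥0) < β.toNNReal := by rw [Real.toNNReal_pos]; linarith
  have hC : (0 : ℝ≥0) < (1 - β).toNNReal := by rw [Real.toNNReal_pos]; linarith
  set B := β.toNNReal
  set C := (1 - β).toNNReal
  set q : ℝ≥0 := C / B with hq
  have hq0 : (0 : ℝ≥0) < q := div_pos hC hB
  have hq1 : q ≤ 1 := by
    rw [hq, div_le_one hB]
    exact Real.toNNReal_mono (by linarith)
  have hW : W β x = B ^ n * q ^ ((hammingNorm x : ℤ)) := W_eq β ⟨hβ0, hβ1⟩ x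
  have hW' : W β x' = B ^ n * q ^ ((hammingNorm x' : ℤ)) := W_eq β ⟨hβ0, hβ1⟩ x'
  constructor
  · intro hd
    rw [hW, hW', mul_comm (q ^ m) _, mul_assoc, ← zpow_add₀ hq0.ne']
    exact mul_le_mul_right (zpow_le_zpow_right_of_le_one₀ hq0 hq1 (by omega)) _
  · intro hd
    rw [hW, hW', mul_comm (q ^ m) _, mul_assoc, ← zpow_add₀ hq0.ne']
    exact mul_le_mul_right (zpow_le_zpow_right_of_le_one₀ hq0 hq1 (by omega)) _

end Stmt15Aux

namespace Stmt15Aux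

open scoped NNReal Classical

lemma sum_mono {α : Type*} (f g : α → ℝ≥0) (t : ℝ≥0) (FH FA : Finset α)
    (hH : ∀ z ∈ FH, g z ≤ t * f z)
    (hHc : ∀ z ∉ FH, t * f z ≤ g z)
    (hP : ∑ z ∈ FH, f z ≤ ∑ z ∈ FA, f z) :
    ∑ z ∈ FH, g z ≤ ∑ z ∈ FA, g z := by
  classical
  have h1 : ∑ z ∈ FH \ FA, f z ≤ ∑ z ∈ FA \ FH, f z := by
    have e1 := Finset.sum_inter_add_sum_sdiff FH FA f
    have e2 := Finset.sum_inter_add_sum_sdiff FA FH f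
    rw [Finset.inter_comm] at e2
    rw [← e1, ← e2] at hP
    exact le_of_add_le_add_left hP
  have h2 : ∑ z ∈ FH \ FA, g z ≤ ∑ z ∈ FA \ FH, g z :=
    calc ∑ z ∈ FH \ FA, g z ≤ ∑ z ∈ FH \ FA, t * f z :=
          Finset.sum_le_sum fun z hz => hH z (Finset.mem_sdiff.1 hz).1
      _ = t * ∑ z ∈ FH \ FA, f z := (Finset.mul_sum _ _ _).symm
      _ ≤ t * ∑ z ∈ FA \ FH, f z := mul_le_mul_right h1 t
      _ = ∑ z ∈ FA \ FH, t * f z := Finset.mul_sum _ _ _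
      _ ≤ ∑ z ∈ FA \ FH, g z :=
          Finset.sum_le_sum fun z hz => hHc z (Finset.mem_sdiff.1 hz).2
  calc ∑ z ∈ FH, g z
      = ∑ z ∈ FH ∩ FA, g z + ∑ z ∈ FH \ FA, g z :=
        (Finset.sum_inter_add_sum_sdiff _ _ _).symm
    _ ≤ ∑ z ∈ FH ∩ FA, g z + ∑ z ∈ FA \ FH, g z := add_le_add_right h2 _
    _ = ∑ z ∈ FA ∩ FH, g z + ∑ z ∈ FA \ FH, g z := by rw [Finset.inter_comm]
    _ = ∑ z ∈ FA, g z := Finset.sum_inter_add_sum_sdiff _ _ _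

end Stmt15Aux


/-- **Theorems 2 & 3 combined (Certified Defense Budget for Structure Perturbations)**:
if `P(h(a ⊕ Γ) = 1) > 1/2` and for every `Δ` with `‖Δ‖₀ ≤ ε` there are a level `μ_Δ` and a
subset `H'_Δ` of the boundary level set such that the region
`H_Δ = (⋃_{i > μ_Δ} H_i(Δ)) ∪ H'_Δ` satisfies `P(a ⊕ Γ ∈ H_Δ) ≤ P(h(a ⊕ Γ) = 1)` and
`P(a ⊕ Δ ⊕ Γ ∈ H_Δ) > 1/2`, then for every such `Δ` the positive probability after
perturbation exceeds `1/2`, and hence the Bernoulli-smoothed classifier `g̃` satisfies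
`g̃(a ⊕ Δ) = g̃(a) = 1`. Here `H_i(Δ) = {z : ‖z ⊕ a ⊕ Δ‖₀ − ‖z ⊕ a‖₀ = i}`, `⊕` is
coordinatewise XOR (addition in `ZMod 2`), and `‖·‖₀` is the Hamming weight. -/
theorem stmt_15
    (n : ℕ) (β : ℝ) (hβ : β ∈ Set.Ioo (1 / 2 : ℝ) 1)
    (μ : Measure (Fin n → ZMod 2))
    (hμ : μ = Measure.pi (fun _ => flipNoise β))
    (h : (Fin n → ZMod 2) → Bool) (a : Fin n → ZMod 2)
    (gsmooth : (Fin n → ZMod 2) → Bool)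
    (hgsmooth : ∀ b, gsmooth b = true ↔ (1 : ℝ≥0∞) / 2 < μ {γ | h (b + γ) = true})
    (hpos : (1 : ℝ≥0∞) / 2 < μ {γ | h (a + γ) = true})
    (ε : ℕ)
    (hcert : ∀ Δ : Fin n → ZMod 2, hammingNorm Δ ≤ ε →
      ∃ (m : ℤ) (H' : Set (Fin n → ZMod 2)),
        H' ⊆ {z | (hammingNorm (z + a + Δ) : ℤ) - (hammingNorm (z + a) : ℤ) = m} ∧
        μ {γ | a + γ ∈
            ({z | m < (hammingNorm (z + a + Δ) : ℤ) - (hammingNorm (z + a) : ℤ)} ∪ H')} ≤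
          μ {γ | h (a + γ) = true} ∧
        (1 : ℝ≥0∞) / 2 < μ {γ | a + Δ + γ ∈
            ({z | m < (hammingNorm (z + a + Δ) : ℤ) - (hammingNorm (z + a) : ℤ)} ∪ H')}) :
    ∀ Δ : Fin n → ZMod 2, hammingNorm Δ ≤ ε →
      (1 : ℝ≥0∞) / 2 < μ {γ | h (a + Δ + γ) = true} ∧
        gsmooth (a + Δ) = gsmooth a ∧ gsmooth a = true := by
  subst hμ
  intro Δ hΔ
  obtain ⟨m, H', hH'sub, hPle, hQgt⟩ := hcert Δ hΔ
  set A : Set (Fin n → ZMod 2) := {z | h z = true} with hA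
  set Hset : Set (Fin n → ZMod 2) :=
    {z | m < (hammingNorm (z + a + Δ) : ℤ) - (hammingNorm (z + a) : ℤ)} ∪ H' with hHset
  set q : NNReal := (1 - β).toNNReal / β.toNNReal with hq
  have key : (1 : ℝ≥0∞) / 2 < Measure.pi (fun _ => flipNoise β) {γ | h (a + Δ + γ) = true} := by
    have e1 : {γ | h (a + γ) = true} = {γ | a + γ ∈ A} := rfl
    have e2 : {γ | h (a + Δ + γ) = true} = {γ | a + Δ + γ ∈ A} := rfl
    rw [e1, Stmt15Aux.meas_shift β a A, Stmt15Aux.meas_shift β a Hset] at hPle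
    rw [Stmt15Aux.meas_shift β (a + Δ) Hset] at hQgt
    rw [e2, Stmt15Aux.meas_shift β (a + Δ) A]
    refine lt_of_lt_of_le hQgt (ENNReal.coe_le_coe.mpr ?_)
    refine Stmt15Aux.sum_mono (fun z => Stmt15Aux.W β (z + a))
      (fun z => Stmt15Aux.W β (z + (a + Δ))) (q ^ m) _ _ ?_ ?_
      (ENNReal.coe_le_coe.mp hPle)
    · intro z hz
      simp only [← add_assoc]
      refine (Stmt15Aux.key_ratio β hβ m (z + a) (z + a + Δ)).1 ?_
      have hzH : z ∈ Hset := by simpa using hz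
      rcases hzH with hz1 | hz2
      · exact le_of_lt hz1
      · exact le_of_eq (hH'sub hz2).symm
    · intro z hz
      simp only [← add_assoc]
      refine (Stmt15Aux.key_ratio β hβ m (z + a) (z + a + Δ)).2 ?_
      have : z ∉ Hset := by
        intro hmem
        exact hz (by simpa using hmem)
      have : ¬ m < (hammingNorm (z + a + Δ) : ℤ) - (hammingNorm (z + a) : ℤ) :=
        fun hlt => this (Or.inl hlt)
      omega
  refine ⟨key, ?_, (hgsmooth a).2 hpos⟩
  rw [(hgsmooth (a + Δ)).2 key, (hgsmooth a).2 hpos]
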